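/- Let N ≥ 2, p > 1, 0 ≤ α < p-1, m > 0, γ = (N-1)(p-1-α)/(p-1), and suppose w, v : (0,R) → (0,∞) are C¹ functions satisfying (w^{p-1-α})'(r) + (γ/r)w(r)^{p-1-α} = ((p-1-α)/(p-1))v(r)^m for all r ∈ (0,R), with v strictly increasing, w(0⁺) = 0. Then for all r ∈ (0,R): ((p-1-α)/(N(p-1-α)+α))·v(r)^m < (w^{p-1-α})'(r) < ((p-1-α)/(p-1))·v(r)^m. -/

import Mathlib

open Set Filter

/-- Two-sided bounds on `(w^{p-1-α})'`: inequality (2.3) of Lemma 2.1. -/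
theorem stmt_9 (N R p α m : ℝ) (hN : 2 ≤ N) (hR : 0 < R)
    (hp : 1 < p) (hα0 : 0 ≤ α) (hα : α < p - 1) (hm : 0 < m)
    (γ : ℝ) (hγ : γ = (N - 1) * (p - 1 - α) / (p - 1))
    (w v : ℝ → ℝ)
    (hwC1 : ContDiffOn ℝ 1 w (Ioo 0 R)) (hvC1 : ContDiffOn ℝ 1 v (Ioo 0 R))
    (hwpos : ∀ r ∈ Ioo 0 R, 0 < w r) (hvpos : ∀ r ∈ Ioo 0 R, 0 < v r)
    (hvmono : StrictMonoOn v (Ioo 0 R))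
    (hw0 : Tendsto w (nhdsWithin 0 (Ioi 0)) (nhds 0))
    (heq : ∀ r ∈ Ioo 0 R,
      deriv (fun s => (w s) ^ (p - 1 - α)) r + (γ / r) * (w r) ^ (p - 1 - α)
        = ((p - 1 - α) / (p - 1)) * (v r) ^ m) :
    ∀ r ∈ Ioo 0 R,
      ((p - 1 - α) / (N * (p - 1 - α) + α)) * (v r) ^ m
          < deriv (fun s => (w s) ^ (p - 1 - α)) r ∧
      deriv (fun s => (w s) ^ (p - 1 - α)) r < ((p - 1 - α) / (p - 1)) * (v r) ^ m := by
  have hp1 : (0:ℝ) < p - 1 := by linarith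
  have hβ : (0:ℝ) < p - 1 - α := by linarith
  set β := p - 1 - α with hβdef
  set c := β / (p - 1) with hcdef
  have hc : 0 < c := div_pos hβ hp1
  have hγpos : 0 < γ := by
    rw [hγ]
    apply div_pos _ hp1
    nlinarith
  have hγ1 : (0:ℝ) < γ + 1 := by linarith
  -- differentiability of w^β
  have hwD : ∀ s ∈ Ioo 0 R, HasDerivAt (fun t => w t ^ β)
      (deriv (fun t => w t ^ β) s) s := by
    intro s hs
    have hdw : HasDerivAt w (deriv w s) s :=
      ((hwC1.differentiableOn one_ne_zero).differentiableAt
        (isOpen_Ioo.mem_nhds hs)).hasDerivAt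
    have h := hdw.rpow_const (p := β) (Or.inl (hwpos s hs).ne')
    exact h.deriv ▸ h
  intro r hr
  obtain ⟨hr0, hrR⟩ := hr
  have hrmem : r ∈ Ioo 0 R := ⟨hr0, hrR⟩
  have hvrm : 0 < v r ^ m := Real.rpow_pos_of_pos (hvpos r hrmem) m
  have heqr := heq r hrmem
  have hwrβ : 0 < w r ^ β := Real.rpow_pos_of_pos (hwpos r hrmem) β
  -- Upper bound is easy
  have hupper : deriv (fun s => w s ^ β) r < c * v r ^ m := by
    have : 0 < γ / r * w r ^ β := by positivity
    linarith
  -- The auxiliary function H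
  set H : ℝ → ℝ := fun s => c * v r ^ m * (s ^ (γ + 1) / (γ + 1)) - s ^ γ * w s ^ β
    with hHdef
  have hHderiv : ∀ s ∈ Ioo 0 R,
      HasDerivAt H (s ^ γ * (c * (v r ^ m - v s ^ m))) s := by
    intro s hs
    obtain ⟨hs0, hsR⟩ := hs
    have hD := hwD s ⟨hs0, hsR⟩
    have h1 : HasDerivAt (fun t : ℝ => t ^ (γ + 1)) ((γ + 1) * s ^ γ) s := by
      have := Real.hasDerivAt_rpow_const (x := s) (p := γ + 1) (Or.inl hs0.ne')
      simpa using this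
    have h2 : HasDerivAt (fun t : ℝ => t ^ γ) (γ * s ^ (γ - 1)) s :=
      Real.hasDerivAt_rpow_const (Or.inl hs0.ne')
    have h3 : HasDerivAt (fun t => t ^ γ * w t ^ β)
        (γ * s ^ (γ - 1) * w s ^ β + s ^ γ * deriv (fun t => w t ^ β) s) s :=
      h2.mul hD
    have h4 : HasDerivAt H
        (c * v r ^ m * ((γ + 1) * s ^ γ / (γ + 1))
          - (γ * s ^ (γ - 1) * w s ^ β + s ^ γ * deriv (fun t => w t ^ β) s)) s :=
      ((h1.div_const _).const_mul _).sub h3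
    convert h4 using 1
    have heqs := heq s ⟨hs0, hsR⟩
    have hD' : deriv (fun t => w t ^ β) s = c * v s ^ m - γ / s * w s ^ β := by
      linarith
    rw [hD']
    have hdiv : s ^ (γ - 1) = s ^ γ / s := by
      rw [Real.rpow_sub hs0, Real.rpow_one]
    rw [hdiv]
    field_simp
    ring
  -- H tends to 0 at 0+
  have hH0 : Tendsto H (nhdsWithin 0 (Ioi 0)) (nhds 0) := by
    have h1 : Tendsto (fun s : ℝ => s ^ (γ + 1)) (nhdsWithin 0 (Ioi 0)) (nhds 0) := by
      have := (Real.continuousAt_rpow_const 0 (γ + 1) (Or.inr (by linarith))).tendsto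
      rw [Real.zero_rpow hγ1.ne'] at this
      exact this.mono_left nhdsWithin_le_nhds
    have h2 : Tendsto (fun s : ℝ => s ^ γ) (nhdsWithin 0 (Ioi 0)) (nhds 0) := by
      have := (Real.continuousAt_rpow_const 0 γ (Or.inr hγpos.le)).tendsto
      rw [Real.zero_rpow hγpos.ne'] at this
      exact this.mono_left nhdsWithin_le_nhds
    have h3 : Tendsto (fun s => w s ^ β) (nhdsWithin 0 (Ioi 0)) (nhds 0) := by
      have hc3 := (Real.continuousAt_rpow_const 0 β (Or.inr hβ.le)).tendsto
      rw [Real.zero_rpow hβ.ne'] at hc3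
      exact hc3.comp hw0
    have := ((h1.div_const (γ + 1)).const_mul (c * v r ^ m)).sub (h2.mul h3)
    simpa using this
  -- strict comparison
  have hHmono : ∀ a b, 0 < a → a < b → b ≤ r → H a < H b := by
    intro a b ha hab hbr
    have hbR : b < R := lt_of_le_of_lt hbr hrR
    have hmono : StrictMonoOn H (Icc a b) := by
      apply strictMonoOn_of_deriv_pos (convex_Icc a b)
      · intro x hx
        have hxm : x ∈ Ioo 0 R := ⟨lt_of_lt_of_le ha hx.1, lt_of_le_of_lt hx.2 hbR⟩
        exact (hHderiv x hxm).continuousAt.continuousWithinAt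
      · intro x hx
        rw [interior_Icc] at hx
        have hxm : x ∈ Ioo 0 R := ⟨lt_trans ha hx.1, lt_trans hx.2 hbR⟩
        rw [(hHderiv x hxm).deriv]
        have hxγ : 0 < x ^ γ := Real.rpow_pos_of_pos hxm.1 γ
        have hxr : x < r := lt_of_lt_of_le hx.2 hbr
        have hvx : v x ^ m < v r ^ m :=
          Real.rpow_lt_rpow (hvpos x hxm).le (hvmono hxm hrmem hxr) hm
        have : 0 < v r ^ m - v x ^ m := by linarith
        positivity
    exact hmono (left_mem_Icc.mpr hab.le) (right_mem_Icc.mpr hab.le) hab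
  have hhalf : 0 ≤ H (r / 2) := by
    have hev : ∀ᶠ s in nhdsWithin 0 (Ioi 0), H s ≤ H (r / 2) := by
      filter_upwards [Ioo_mem_nhdsGT_of_mem (by constructor <;> [rfl; positivity] :
        (0:ℝ) ∈ Ico 0 (r / 2))] with s hs
      exact (hHmono s (r / 2) hs.1 hs.2 (by linarith)).le
    exact le_of_tendsto hH0 hev
  have hHr : 0 < H r := lt_of_le_of_lt hhalf (hHmono (r / 2) r (by positivity) (by linarith) le_rfl)
  -- unpack H r > 0 into the key estimate
  have hkey : γ / r * w r ^ β < γ / (γ + 1) * (c * v r ^ m) := by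
    have hrγ : 0 < r ^ γ := Real.rpow_pos_of_pos hr0 γ
    have hradd : r ^ (γ + 1) = r ^ γ * r := Real.rpow_add_one hr0.ne' γ
    have h1 : r ^ γ * w r ^ β < c * v r ^ m * (r ^ γ * r / (γ + 1)) := by
      have := hHr
      simp only [hHdef, hradd] at this ⊢
      linarith
    have h2 : w r ^ β < c * v r ^ m * (r / (γ + 1)) := by
      have e : c * v r ^ m * (r ^ γ * r / (γ + 1))
          = r ^ γ * (c * v r ^ m * (r / (γ + 1))) := by
        field_simp
      rw [e] at h1
      exact lt_of_mul_lt_mul_left h1 hrγ.le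
    calc γ / r * w r ^ β < γ / r * (c * v r ^ m * (r / (γ + 1))) := by
          apply mul_lt_mul_of_pos_left h2 (by positivity)
      _ = γ / (γ + 1) * (c * v r ^ m) := by field_simp
  refine ⟨?_, hupper⟩
  -- lower bound
  have hid : (γ + 1) * (p - 1) = N * β + α := by
    rw [hγ, hβdef]; field_simp; ring
  have hNβ : 0 < N * β + α := by rw [← hid]; positivity
  have hfinal : β / (N * β + α) * v r ^ m = c * v r ^ m - γ / (γ + 1) * (c * v r ^ m) := by
    rw [hcdef, ← hid]
    field_simp
    ring
  rw [hfinal]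
  linarith
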